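/- arXiv:2412.16308 — 2 statements merged into one kernel-verified Lean document; each statement's English description precedes it below -/
import Mathlib

section
/- Let K be an algebraically closed field, n ≥ 1, and let f be an irreducible Laurent polynomial in n variables over K such that there exists e ∈ ℤⁿ with m − m' ∈ ℤ·e for all m, m' ∈ supp(f). Then supp(f) has at most 2 elements, i.e. f is a monomial or a binomial. -/
open scoped BigOperators

noncomputable section

/-- The ring of Laurent polynomials in variables indexed by `σ` over `K`,
realized as the monoid algebra `K[x₁^{±1},…]` on the exponent group `σ → ℤ`. -/
abbrev LaurentPoly (K : Type*) [CommSemiring K] (σ : Type*) : Type _ :=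
  AddMonoidAlgebra K (σ → ℤ)

variable {K : Type*} [Field K] {σ : Type*} [Fintype σ]

/-- `t ^ a = ∏ i, (t i) ^ (a i)` for a torus point `t ∈ (Kˣ)^σ` and `a ∈ ℤ^σ`. -/
def torusPow (t : σ → Kˣ) (a : σ → ℤ) : K :=
  ∏ i, ((t i ^ a i : Kˣ) : K)

/-- Evaluation of a Laurent polynomial `f = ∑ a α_a x^a` at a point `t` of the
torus: `f(t) = ∑ a α_a t^a`. -/
def laurentEval (f : LaurentPoly K σ) (t : σ → Kˣ) : K :=
  f.coeff.sum fun a c => c * torusPow t a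

/-- The twist `t*f = ∑ a α_a t^a x^a` of a Laurent polynomial by a torus point. -/
def laurentTwist (t : σ → Kˣ) (f : LaurentPoly K σ) : LaurentPoly K σ :=
  f.coeff.sum fun a c => AddMonoidAlgebra.single a (c * torusPow t a)

/-- The height of a (prime) ideal: the supremum of lengths of chains of prime
ideals strictly contained in it. -/
def idealHeight {R : Type*} [CommRing R] (P : Ideal R) : ℕ∞ :=
  Set.chainHeight {Q : Ideal R | Q.IsPrime ∧ Q < P} (· < ·)

/-- A family of Laurent polynomials meets properly if, for every subset `I` of
the index set, every minimal prime of the ideal generated by the corresponding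
subfamily has height `#I`. -/
def MeetsProperly {k : ℕ} (g : Fin k → LaurentPoly K σ) : Prop :=
  ∀ I : Finset (Fin k), ∀ P ∈ (Ideal.span (g '' ↑I)).minimalPrimes,
    idealHeight P = I.card


open Finsupp

section Helpers

variable {K : Type*} [Field K] {Γ : Type*} [AddCommGroup Γ] [LinearOrder Γ] [IsOrderedAddMonoid Γ]

lemma mul_apply_max_add_max {g h : AddMonoidAlgebra K Γ} {a b : Γ}
    (ha : a ∈ g.coeff.support) (hb : b ∈ h.coeff.support)
    (hamax : ∀ x ∈ g.coeff.support, x ≤ a) (hbmax : ∀ x ∈ h.coeff.support, x ≤ b) :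
    (g * h).coeff (a + b) = g.coeff a * h.coeff b := by
  classical
  rw [AddMonoidAlgebra.coeff_mul]
  simp only [Finsupp.sum]
  rw [Finset.sum_eq_single_of_mem a ha ?hout]
  · rw [Finset.sum_eq_single_of_mem b hb ?hin]
    · exact if_pos rfl
    case hin =>
      intro y hy hne
      exact if_neg fun hxy => hne (add_left_cancel hxy)
  case hout =>
    intro x hx hne
    refine Finset.sum_eq_zero fun y hy => if_neg fun hxy => ?_
    exact absurd hxy
      (ne_of_lt (add_lt_add_of_lt_of_le ((hamax x hx).lt_of_ne hne) (hbmax y hy)))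

lemma mul_apply_min_add_min {g h : AddMonoidAlgebra K Γ} {a b : Γ}
    (ha : a ∈ g.coeff.support) (hb : b ∈ h.coeff.support)
    (hamin : ∀ x ∈ g.coeff.support, a ≤ x) (hbmin : ∀ x ∈ h.coeff.support, b ≤ x) :
    (g * h).coeff (a + b) = g.coeff a * h.coeff b := by
  classical
  rw [AddMonoidAlgebra.coeff_mul]
  simp only [Finsupp.sum]
  rw [Finset.sum_eq_single_of_mem a ha ?hout]
  · rw [Finset.sum_eq_single_of_mem b hb ?hin]
    · exact if_pos rfl
    case hin =>
      intro y hy hne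
      exact if_neg fun hxy => hne (add_left_cancel hxy)
  case hout =>
    intro x hx hne
    refine Finset.sum_eq_zero fun y hy => if_neg fun hxy => ?_
    exact absurd hxy
      (ne_of_gt (add_lt_add_of_lt_of_le ((hamin x hx).lt_of_ne hne.symm) (hbmin y hy)))

lemma support_card_le_one_of_mul_eq_one {g h : AddMonoidAlgebra K Γ}
    (hgh : g * h = 1) : g.coeff.support.card ≤ 1 := by
  classical
  have hg : g ≠ 0 := by rintro rfl; rw [zero_mul] at hgh; exact one_ne_zero hgh.symm
  have hh : h ≠ 0 := by rintro rfl; rw [mul_zero] at hgh; exact one_ne_zero hgh.symm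
  have hgs : g.coeff.support.Nonempty :=
    Finsupp.support_nonempty_iff.2 (by rwa [Ne, AddMonoidAlgebra.coeff_eq_zero])
  have hhs : h.coeff.support.Nonempty :=
    Finsupp.support_nonempty_iff.2 (by rwa [Ne, AddMonoidAlgebra.coeff_eq_zero])
  set aM := g.coeff.support.max' hgs with haM
  set bM := h.coeff.support.max' hhs with hbM
  set am := g.coeff.support.min' hgs with ham
  set bm := h.coeff.support.min' hhs with hbm
  have key : ∀ x y : Γ, (g * h).coeff (x + y) = g.coeff x * h.coeff y → x ∈ g.coeff.support →
      y ∈ h.coeff.support →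
      x + y = 0 := by
    intro x y hc hx hy
    by_contra hne
    have h0 : (1 : AddMonoidAlgebra K Γ).coeff (x + y) = 0 :=
      Finsupp.single_eq_of_ne' (fun h0 => hne h0.symm)
    rw [hgh, h0] at hc
    exact mul_ne_zero (Finsupp.mem_support_iff.1 hx) (Finsupp.mem_support_iff.1 hy) hc.symm
  have hM : aM + bM = 0 :=
    key aM bM (mul_apply_max_add_max (g.coeff.support.max'_mem hgs) (h.coeff.support.max'_mem hhs)
      (fun x hx => Finset.le_max' _ _ hx) (fun x hx => Finset.le_max' _ _ hx))
      (g.coeff.support.max'_mem hgs) (h.coeff.support.max'_mem hhs)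
  have hm : am + bm = 0 :=
    key am bm (mul_apply_min_add_min (g.coeff.support.min'_mem hgs) (h.coeff.support.min'_mem hhs)
      (fun x hx => Finset.min'_le _ _ hx) (fun x hx => Finset.min'_le _ _ hx))
      (g.coeff.support.min'_mem hgs) (h.coeff.support.min'_mem hhs)
  have heq : am = aM := by
    have h1 : am ≤ aM := Finset.min'_le _ _ (g.coeff.support.max'_mem hgs)
    have h2 : bm ≤ bM := Finset.min'_le _ _ (h.coeff.support.max'_mem hhs)
    have : aM = -bM := eq_neg_of_add_eq_zero_left hM
    have : am = -bm := eq_neg_of_add_eq_zero_left hm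
    have h3 : aM ≤ am := by
      rw [‹aM = -bM›, ‹am = -bm›]
      exact neg_le_neg h2
    exact le_antisymm h1 h3
  refine Finset.card_le_one.2 fun x hx y hy => ?_
  have hx1 : x ≤ aM := Finset.le_max' _ _ hx
  have hx2 : am ≤ x := Finset.min'_le _ _ hx
  have hy1 : y ≤ aM := Finset.le_max' _ _ hy
  have hy2 : am ≤ y := Finset.min'_le _ _ hy
  rw [heq] at hx2 hy2
  rw [le_antisymm hx1 hx2, le_antisymm hy1 hy2]

end Helpers

noncomputable instance lexLOACG (n : ℕ) : IsOrderedAddMonoid (Lex (Fin n → ℤ)) :=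
  inferInstance

set_option maxHeartbeats 2000000 in
lemma laurent_not_isUnit {K : Type*} [Field K] {n : ℕ}
    {g : AddMonoidAlgebra K (Fin n → ℤ)} (h2 : 2 ≤ g.coeff.support.card) : ¬ IsUnit g := by
  intro hu
  obtain ⟨h, hgh⟩ := hu.exists_right_inv
  have := support_card_le_one_of_mul_eq_one (Γ := Lex (Fin n → ℤ)) (K := K) (g := g) (h := h) hgh
  have h1 : g.coeff.support.card ≤ 1 := this
  omega

/-- Over an algebraically closed field, an irreducible Laurent
polynomial whose support has all its differences lying on a single line `ℤ·e`
is a monomial or a binomial. -/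
theorem irreducible_support_on_line_card_le_two
    (K : Type*) [Field K] [IsAlgClosed K] (n : ℕ) (hn : 1 ≤ n)
    (f : LaurentPoly K (Fin n)) (hf : Irreducible f)
    (e : Fin n → ℤ)
    (hline : ∀ m ∈ f.coeff.support, ∀ m' ∈ f.coeff.support, ∃ c : ℤ, m - m' = c • e) :
    f.coeff.support.card ≤ 2 := by
  classical
  by_contra hcard
  push_neg at hcard
  have h3 : 3 ≤ f.coeff.support.card := hcard
  have hf0 : f ≠ 0 := hf.ne_zero
  have hnemp : f.coeff.support.Nonempty :=
    Finsupp.support_nonempty_iff.2 (by rwa [Ne, AddMonoidAlgebra.coeff_eq_zero])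
  obtain ⟨m0, hm0⟩ := hnemp
  obtain ⟨m1, hm1, m2, hm2, h12⟩ := Finset.one_lt_card.1 (by omega : 1 < f.coeff.support.card)
  have he : e ≠ 0 := by
    rintro rfl
    obtain ⟨c, hc⟩ := hline m1 hm1 m2 hm2
    simp only [smul_zero] at hc
    exact h12 (sub_eq_zero.1 hc)
  obtain ⟨i0, hi0⟩ : ∃ i, e i ≠ 0 := by
    by_contra hall; push_neg at hall; exact he (funext hall)
  have hsmul : ∀ c c' : ℤ, c • e = c' • e → c = c' := by
    intro c c' h
    have h' := congrFun h i0
    simp only [Pi.smul_apply, smul_eq_mul] at h'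
    exact mul_right_cancel₀ hi0 h'
  set ψ : (Fin n → ℤ) → ℤ := fun m => (m i0 - m0 i0) / e i0 with hψdef
  have hψ : ∀ m ∈ f.coeff.support, m = m0 + ψ m • e := by
    intro m hm
    obtain ⟨c, hc⟩ := hline m hm m0 hm0
    have h1 : m i0 - m0 i0 = c * e i0 := by
      have h2 := congrFun hc i0
      simpa only [Pi.sub_apply, Pi.smul_apply, smul_eq_mul] using h2
    have hcc : ψ m = c := by
      rw [hψdef]; dsimp only; rw [h1, Int.mul_ediv_cancel _ hi0]
    rw [hcc, ← hc]; abel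
  have hψinj : ∀ m ∈ f.coeff.support, ∀ m' ∈ f.coeff.support, ψ m = ψ m' → m = m' := by
    intro m hm m' hm' h; rw [hψ m hm, hψ m' hm', h]
  have himg : (f.coeff.support.image ψ).Nonempty := ⟨ψ m0, Finset.mem_image_of_mem _ hm0⟩
  set N := (f.coeff.support.image ψ).min' himg with hNdef
  have hN : ∀ m ∈ f.coeff.support, N ≤ ψ m := fun m hm =>
    Finset.min'_le _ _ (Finset.mem_image_of_mem _ hm)
  obtain ⟨mmin, hmmin, hmineq⟩ := Finset.mem_image.1 ((f.coeff.support.image ψ).min'_mem himg)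
  set k : (Fin n → ℤ) → ℕ := fun m => (ψ m - N).toNat with hkdef
  have hk : ∀ m ∈ f.coeff.support, (k m : ℤ) = ψ m - N := fun m hm =>
    Int.toNat_of_nonneg (sub_nonneg.2 (hN m hm))
  have hkinj : ∀ m ∈ f.coeff.support, ∀ m' ∈ f.coeff.support, k m = k m' → m = m' := by
    intro m hm m' hm' h
    apply hψinj m hm m' hm'
    have h' : ((k m : ℤ)) = (k m' : ℤ) := by exact_mod_cast h
    rw [hk m hm, hk m' hm'] at h'
    omega
  set p : Polynomial K := ∑ m ∈ f.coeff.support, Polynomial.C (f.coeff m) * Polynomial.X ^ (k m) with hpdef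
  have hpcoeff : ∀ m ∈ f.coeff.support, p.coeff (k m) = f.coeff m := by
    intro m hm
    rw [hpdef, Polynomial.finset_sum_coeff]
    rw [Finset.sum_eq_single_of_mem m hm]
    · rw [Polynomial.coeff_C_mul, Polynomial.coeff_X_pow, if_pos rfl, mul_one]
    · intro m' hm' hne'
      rw [Polynomial.coeff_C_mul, Polynomial.coeff_X_pow, if_neg, mul_zero]
      exact fun hkk => hne' ((hkinj m hm m' hm' hkk).symm)
  have hkmin : k mmin = 0 := by
    rw [hkdef]; dsimp only; rw [hmineq]; simp [hNdef]
  have hp0 : p.coeff 0 ≠ 0 := by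
    rw [← hkmin, hpcoeff mmin hmmin]
    exact Finsupp.mem_support_iff.1 hmmin
  have hpne : p ≠ 0 := fun h => hp0 (by rw [h]; simp)
  have himgsub : f.coeff.support.image k ⊆ p.support := by
    intro x hx; obtain ⟨m, hm, rfl⟩ := Finset.mem_image.1 hx
    rw [Polynomial.mem_support_iff, hpcoeff m hm]
    exact Finsupp.mem_support_iff.1 hm
  have hcardp : 3 ≤ p.support.card := by
    refine le_trans ?_ (Finset.card_le_card himgsub)
    rw [Finset.card_image_of_injOn (fun m hm m' hm' h => hkinj m hm m' hm' h)]
    exact h3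
  have hdeg2 : 2 ≤ p.natDegree := by
    have hs := Polynomial.supp_subset_range_natDegree_succ (p := p)
    have hc := Finset.card_le_card hs
    rw [Finset.card_range] at hc
    omega
  obtain ⟨a, ha⟩ := IsAlgClosed.exists_root p (by
    intro h
    rw [Polynomial.degree_eq_natDegree hpne] at h
    have : p.natDegree = 0 := by exact_mod_cast h
    omega)
  have ha0 : a ≠ 0 := by
    rintro rfl
    have heval : p.eval 0 = 0 := ha
    rw [← Polynomial.coeff_zero_eq_eval_zero] at heval
    exact hp0 heval
  obtain ⟨r, hr⟩ := (Polynomial.dvd_iff_isRoot).2 ha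
  have hrne : r ≠ 0 := by rintro rfl; rw [mul_zero] at hr; exact hpne hr
  have hr0 : r.coeff 0 ≠ 0 := by
    intro h0
    apply hp0
    rw [hr, Polynomial.mul_coeff_zero, h0, mul_zero]
  have hXsub : (Polynomial.X - Polynomial.C a) ≠ 0 := Polynomial.X_sub_C_ne_zero a
  have hrdeg : 1 ≤ r.natDegree := by
    have hnd := Polynomial.natDegree_mul hXsub hrne
    rw [← hr, Polynomial.natDegree_X_sub_C] at hnd
    omega
  have hrlead : r.coeff r.natDegree ≠ 0 := by
    rw [← Polynomial.leadingCoeff]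
    exact Polynomial.leadingCoeff_ne_zero.2 hrne
  set Θ : Polynomial K →ₐ[K] LaurentPoly K (Fin n) :=
    Polynomial.aeval (AddMonoidAlgebra.single e 1) with hΘdef
  have halg : ∀ c : K, (algebraMap K (LaurentPoly K (Fin n))) c = AddMonoidAlgebra.single 0 c := by
    intro c; simp
  have hΘX : Θ Polynomial.X = AddMonoidAlgebra.single e 1 := by rw [hΘdef]; exact Polynomial.aeval_X _
  have hΘmono : ∀ (c : K) (j : ℕ), Θ (Polynomial.C c * Polynomial.X ^ j)
      = AddMonoidAlgebra.single ((j : ℤ) • e) c := by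
    intro c j
    rw [map_mul, map_pow, hΘX]
    rw [hΘdef, Polynomial.aeval_C, halg]
    rw [AddMonoidAlgebra.single_pow, AddMonoidAlgebra.single_mul_single, one_pow, zero_add,
      mul_one, natCast_zsmul]
  have happ : ∀ (q : Polynomial K) (d : ℕ), (Θ q).coeff ((d : ℤ) • e) = q.coeff d := by
    intro q d
    conv_lhs => rw [q.as_sum_support]
    rw [map_sum]
    simp_rw [← Polynomial.C_mul_X_pow_eq_monomial, hΘmono]
    rw [AddMonoidAlgebra.coeff_sum, Finset.sum_apply']
    have hterm : ∀ i ∈ q.support,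
        (AddMonoidAlgebra.single ((i : ℤ) • e) (q.coeff i)).coeff ((d : ℤ) • e)
          = if i = d then q.coeff i else 0 := by
      intro i _
      rw [AddMonoidAlgebra.coeff_single, Finsupp.single_apply]
      by_cases h : i = d
      · rw [if_pos (by rw [h]), if_pos h]
      · rw [if_neg, if_neg h]
        intro hh
        exact h (by exact_mod_cast hsmul _ _ hh)
    rw [Finset.sum_congr rfl hterm, Finset.sum_ite_eq' q.support d (fun i => q.coeff i)]
    by_cases hd : d ∈ q.support
    · rw [if_pos hd]
    · rw [if_neg hd, Polynomial.notMem_support_iff.1 hd]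
  have hfact : f = AddMonoidAlgebra.single (m0 + N • e) (1 : K) * Θ p := by
    rw [hpdef, map_sum]
    simp_rw [hΘmono]
    rw [Finset.mul_sum]
    have hterm : ∀ m ∈ f.coeff.support,
        AddMonoidAlgebra.single (m0 + N • e) (1 : K) * AddMonoidAlgebra.single ((k m : ℤ) • e) (f.coeff m)
          = AddMonoidAlgebra.single m (f.coeff m) := by
      intro m hm
      rw [AddMonoidAlgebra.single_mul_single, one_mul]
      congr 1
      rw [hk m hm, sub_smul]
      conv_rhs => rw [hψ m hm]
      abel
    rw [Finset.sum_congr rfl hterm]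
    conv_lhs => rw [← AddMonoidAlgebra.sum_coeff_single f]
    rfl
  set u : LaurentPoly K (Fin n) := AddMonoidAlgebra.single (m0 + N • e) (1 : K) * Θ (Polynomial.X - Polynomial.C a) with hudef
  set v := Θ r with hvdef
  have hfuv : f = u * v := by
    rw [hfact, hr, map_mul, ← mul_assoc]
  have hu : u = AddMonoidAlgebra.single (m0 + N • e + e) (1 : K) - AddMonoidAlgebra.single (m0 + N • e) a := by
    rw [hudef, map_sub, hΘX, hΘdef, Polynomial.aeval_C, halg, mul_sub,
      AddMonoidAlgebra.single_mul_single, AddMonoidAlgebra.single_mul_single,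
      mul_one, one_mul, add_zero]
  have hne2 : m0 + N • e + e ≠ m0 + N • e := fun h => he (add_eq_left.1 h)
  have h2u : 2 ≤ u.coeff.support.card := by
    have hmem1 : (m0 + N • e + e) ∈ u.coeff.support := by
      rw [Finsupp.mem_support_iff, hu, AddMonoidAlgebra.coeff_sub, Finsupp.sub_apply,
        AddMonoidAlgebra.coeff_single, AddMonoidAlgebra.coeff_single, Finsupp.single_eq_same,
        Finsupp.single_eq_of_ne' (fun h => hne2 h.symm), sub_zero]
      exact one_ne_zero
    have hmem2 : (m0 + N • e) ∈ u.coeff.support := by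
      rw [Finsupp.mem_support_iff, hu, AddMonoidAlgebra.coeff_sub, Finsupp.sub_apply,
        AddMonoidAlgebra.coeff_single, AddMonoidAlgebra.coeff_single, Finsupp.single_eq_of_ne' hne2,
        Finsupp.single_eq_same, zero_sub]
      exact neg_ne_zero.2 ha0
    exact Finset.one_lt_card.2 ⟨_, hmem1, _, hmem2, hne2⟩
  have h2v : 2 ≤ v.coeff.support.card := by
    have hmem1 : (0 : Fin n → ℤ) ∈ v.coeff.support := by
      rw [Finsupp.mem_support_iff]
      have h := happ r 0
      rw [Nat.cast_zero, zero_smul] at h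
      rw [hvdef, h]
      exact hr0
    have hmem2 : ((r.natDegree : ℤ) • e) ∈ v.coeff.support := by
      rw [Finsupp.mem_support_iff, hvdef, happ r r.natDegree]
      exact hrlead
    have hne3 : (0 : Fin n → ℤ) ≠ (r.natDegree : ℤ) • e := by
      intro h
      have h' := congrFun h i0
      simp only [Pi.zero_apply, Pi.smul_apply, smul_eq_mul] at h'
      rcases mul_eq_zero.1 h'.symm with h'' | h''
      · have : r.natDegree = 0 := by exact_mod_cast h''
        omega
      · exact hi0 h''
    exact Finset.one_lt_card.2 ⟨_, hmem1, _, hmem2, hne3⟩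
  rcases hf.isUnit_or_isUnit hfuv with h | h
  · exact laurent_not_isUnit h2u h
  · exact laurent_not_isUnit h2v h
end
end

section
/- Let n ≥ 1 and let h₁,…,h_s and g₁,…,g_r be Laurent polynomials in n variables over ℂ such that every common zero of h₁,…,h_s in (ℂˣ)ⁿ is a common zero of g₁,…,g_r. Then for every compact subset C ⊂ (ℂˣ)ⁿ there exist a positive integer κ and a real constant c > 0 such that for all z ∈ C: max_{1≤j≤s} |h_j(z)| ≥ c · ( max_{1≤i≤r} |g_i(z)| )^{κ}. -/
open scoped BigOperators

noncomputable section

variable {K : Type*} [Field K] {σ : Type*} [Fintype σ]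

-- point map
def torusPt {n : ℕ} (z : Fin n → ℂˣ) : Fin n ⊕ Fin n → ℂ :=
  Sum.elim (fun i => (z i : ℂ)) (fun i => ((z i)⁻¹ : ℂˣ))

lemma unit_zpow_split (u : ℂˣ) (m : ℤ) :
    ((u ^ m : ℂˣ) : ℂ) = (u : ℂ) ^ m.toNat * (((u⁻¹ : ℂˣ) : ℂ)) ^ (-m).toNat := by
  have hm : m = (m.toNat : ℤ) - ((-m).toNat : ℤ) := by omega
  have h1 : (u ^ m : ℂˣ) = u ^ m.toNat * (u ^ (-m).toNat)⁻¹ := by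
    rw [← zpow_natCast u m.toNat, ← zpow_natCast u (-m).toNat, ← zpow_sub, ← hm]
  rw [h1]
  simp [← inv_pow]

lemma laurent_lift {n : ℕ} (f : LaurentPoly ℂ (Fin n)) :
    ∃ P : MvPolynomial (Fin n ⊕ Fin n) ℂ,
      ∀ z : Fin n → ℂˣ, MvPolynomial.eval (torusPt z) P = laurentEval f z := by
  classical
  refine ⟨f.coeff.sum fun a c => MvPolynomial.C c *
    ∏ i, MvPolynomial.X (Sum.inl i) ^ (a i).toNat *
      MvPolynomial.X (Sum.inr i) ^ (-(a i)).toNat, fun z => ?_⟩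
  rw [Finsupp.sum, map_sum, laurentEval, Finsupp.sum]
  refine Finset.sum_congr rfl fun a _ => ?_
  rw [map_mul, MvPolynomial.eval_C, map_prod]
  congr 1
  rw [torusPow]
  refine Finset.prod_congr rfl fun i _ => ?_
  rw [map_mul, map_pow, map_pow, MvPolynomial.eval_X, MvPolynomial.eval_X,
    unit_zpow_split]
  rfl

lemma continuous_torusPt {n : ℕ} : Continuous (torusPt (n := n)) := by
  refine continuous_pi fun t => ?_
  cases t with
  | inl i => exact Units.continuous_val.comp (continuous_apply i)
  | inr i => exact Units.continuous_coe_inv.comp (continuous_apply i)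

lemma continuous_laurentEval {n : ℕ} (f : LaurentPoly ℂ (Fin n)) :
    Continuous fun z : Fin n → ℂˣ => laurentEval f z := by
  obtain ⟨P, hP⟩ := laurent_lift f
  have : (fun z : Fin n → ℂˣ => laurentEval f z)
      = fun z => MvPolynomial.eval (torusPt z) P := by
    funext z; rw [hP z]
  rw [this]
  exact (MvPolynomial.continuous_eval P).comp continuous_torusPt

open MvPolynomial in
lemma key_nullstellensatz {n s : ℕ} (h : Fin s → LaurentPoly ℂ (Fin n))
    (G : LaurentPoly ℂ (Fin n))
    (hz : ∀ z : Fin n → ℂˣ, (∀ j, laurentEval (h j) z = 0) → laurentEval G z = 0) :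
    ∃ κ : ℕ, 0 < κ ∧ ∃ a : Fin s → ((Fin n → ℂˣ) → ℂ),
      (∀ j, Continuous (a j)) ∧
      ∀ z, laurentEval G z ^ κ = ∑ j, a j z * laurentEval (h j) z := by
  classical
  choose P hP using fun j => laurent_lift (h j)
  obtain ⟨Q, hQ⟩ := laurent_lift G
  set v : Fin s ⊕ Fin n → MvPolynomial (Fin n ⊕ Fin n) ℂ :=
    Sum.elim P (fun i => X (Sum.inl i) * X (Sum.inr i) - 1) with hv
  set I : Ideal (MvPolynomial (Fin n ⊕ Fin n) ℂ) := Ideal.span (Set.range v) with hI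
  have hQrad : Q ∈ I.radical := by
    rw [← vanishingIdeal_zeroLocus_eq_radical (K := ℂ)]
    intro x hx
    have hrel : ∀ i : Fin n, x (Sum.inl i) * x (Sum.inr i) = 1 := by
      intro i
      have h0 := hx (v (Sum.inr i)) (Ideal.subset_span ⟨Sum.inr i, rfl⟩)
      simp only [hv, Sum.elim_inr, map_sub, map_mul, map_one, eval_X, aeval_X] at h0
      linear_combination h0
    set z : Fin n → ℂˣ := fun i => Units.mkOfMulEqOne _ _ (hrel i) with hzdef
    have hxz : x = torusPt z := by
      funext t
      cases t with
      | inl i => rfl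
      | inr i => rfl
    rw [hxz, show aeval (torusPt z) Q = eval (torusPt z) Q from rfl, hQ]
    refine hz z fun j => ?_
    rw [← hP j z, ← hxz]
    exact hx (v (Sum.inl j)) (Ideal.subset_span ⟨Sum.inl j, rfl⟩)
  obtain ⟨m, hm⟩ := hQrad
  have hm1 : Q ^ (m + 1) ∈ I := by
    rw [pow_succ]
    exact Ideal.mul_mem_right _ _ hm
  rw [hI] at hm1
  obtain ⟨c, hc⟩ := (Submodule.mem_span_range_iff_exists_fun _).mp hm1
  refine ⟨m + 1, Nat.succ_pos m,
    fun j z => eval (torusPt z) (c (Sum.inl j)), fun j => ?_, fun z => ?_⟩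
  · exact (MvPolynomial.continuous_eval _).comp continuous_torusPt
  · have hev := congrArg (eval (torusPt z)) hc
    rw [map_sum, Fintype.sum_sum_type] at hev
    have h2 : ∀ i : Fin n,
        torusPt z (Sum.inl i) * torusPt z (Sum.inr i) - 1 = 0 := fun i => by
      simp [torusPt, Units.mul_inv]
    simp only [smul_eq_mul, map_mul, hv, Sum.elim_inl, Sum.elim_inr, map_sub,
      map_one, eval_X, map_pow, hQ, hP, h2, mul_zero, Finset.sum_const_zero,
      add_zero] at hev
    simpa using hev.symm

/-- If every common zero on the complex torus of the Laurent
polynomials `h₁,…,h_s` is a common zero of `g₁,…,g_r`, then on every compact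
subset of the torus one has `max_j |h_j| ≥ c · (max_i |g_i|)^κ` for some
constants `κ ≥ 1` and `c > 0`. -/
theorem max_abs_comparison_of_zero_set_inclusion
    (n : ℕ) (hn : 1 ≤ n) (s r : ℕ) (hs : 0 < s) (hr : 0 < r)
    (h : Fin s → LaurentPoly ℂ (Fin n)) (g : Fin r → LaurentPoly ℂ (Fin n))
    (hzeros : ∀ z : Fin n → ℂˣ,
      (∀ j, laurentEval (h j) z = 0) → ∀ i, laurentEval (g i) z = 0) :
    ∀ C : Set (Fin n → ℂˣ), IsCompact C →
      ∃ (κ : ℕ) (c : ℝ), 0 < κ ∧ 0 < c ∧ ∀ z ∈ C,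
        c * ((Finset.univ.sup' (Finset.univ_nonempty_iff.mpr
              (Fin.pos_iff_nonempty.mp hr))
            fun i => ‖laurentEval (g i) z‖) ^ κ) ≤
          Finset.univ.sup' (Finset.univ_nonempty_iff.mpr
              (Fin.pos_iff_nonempty.mp hs))
            fun j => ‖laurentEval (h j) z‖ := by
  intro C hC
  classical
  choose κf hκpos a hacont hkey using fun i : Fin r =>
    key_nullstellensatz h (g i) (fun z hz' => hzeros z hz' i)
  set κ : ℕ := Finset.univ.sup κf with hκdef
  have hκpos' : 0 < κ :=
    lt_of_lt_of_le (hκpos ⟨0, hr⟩) (Finset.le_sup (Finset.mem_univ _))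
  have hbg : ∀ i : Fin r, ∃ B : ℝ, ∀ z ∈ C,
      ‖laurentEval (g i) z‖ ≤ B := by
    intro i
    obtain ⟨B, hB⟩ := hC.exists_bound_of_continuousOn
      (continuous_laurentEval (g i)).continuousOn
    exact ⟨B, fun z hz => by simpa using hB z hz⟩
  choose B hB using hbg
  have hba : ∀ (i : Fin r) (j : Fin s), ∃ A : ℝ, ∀ z ∈ C,
      ‖a i j z‖ ≤ A := by
    intro i j
    obtain ⟨A, hA⟩ := hC.exists_bound_of_continuousOn (hacont i j).continuousOn
    exact ⟨A, fun z hz => by simpa using hA z hz⟩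
  choose A hA using hba
  set M : ℝ := 1 + ∑ i, max (B i) 0 with hMdef
  have hM1 : 1 ≤ M := by
    have : 0 ≤ ∑ i, max (B i) 0 :=
      Finset.sum_nonneg fun i _ => le_max_right _ _
    simp only [hMdef]; linarith
  have hMB : ∀ i, B i ≤ M := by
    intro i
    have h1 : max (B i) 0 ≤ ∑ i', max (B i') 0 :=
      Finset.single_le_sum (f := fun i' => max (B i') 0)
        (fun i' _ => le_max_right _ _) (Finset.mem_univ i)
    have h2 := le_max_left (B i) 0
    simp only [hMdef]; linarith
  set Amax : ℝ := 1 + ∑ i, ∑ j, max (A i j) 0 with hAdef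
  have hA1 : 1 ≤ Amax := by
    have : 0 ≤ ∑ i, ∑ j, max (A i j) 0 :=
      Finset.sum_nonneg fun i _ => Finset.sum_nonneg fun j _ => le_max_right _ _
    simp only [hAdef]; linarith
  have hAB : ∀ i j, A i j ≤ Amax := by
    intro i j
    have h1 : max (A i j) 0 ≤ ∑ j', max (A i j') 0 :=
      Finset.single_le_sum (f := fun j' => max (A i j') 0)
        (fun j' _ => le_max_right _ _) (Finset.mem_univ j)
    have h2 : ∑ j', max (A i j') 0 ≤ ∑ i', ∑ j', max (A i' j') 0 :=
      Finset.single_le_sum (f := fun i' => ∑ j', max (A i' j') 0)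
        (fun i' _ => Finset.sum_nonneg fun j' _ => le_max_right _ _)
        (Finset.mem_univ i)
    have h3 := le_max_left (A i j) 0
    simp only [hAdef]; linarith
  have hMpos : (0:ℝ) < M := lt_of_lt_of_le one_pos hM1
  have hApos : (0:ℝ) < Amax := lt_of_lt_of_le one_pos hA1
  have hspos : (0:ℝ) < s := by exact_mod_cast hs
  refine ⟨κ, (M ^ κ * (s * Amax))⁻¹, hκpos', by positivity, fun z hzC => ?_⟩
  rw [inv_mul_le_iff₀ (by positivity)]
  obtain ⟨i₀, -, hi₀⟩ := Finset.exists_mem_eq_sup'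
    (Finset.univ_nonempty_iff.mpr (Fin.pos_iff_nonempty.mp hr))
    (fun i => ‖laurentEval (g i) z‖)
  have hκle : κf i₀ ≤ κ := Finset.le_sup (Finset.mem_univ i₀)
  have hH0 : (0:ℝ) ≤ Finset.univ.sup' (Finset.univ_nonempty_iff.mpr
      (Fin.pos_iff_nonempty.mp hs)) fun j => ‖laurentEval (h j) z‖ :=
    le_trans (norm_nonneg (laurentEval (h ⟨0, hs⟩) z))
      (Finset.le_sup' (fun j => ‖laurentEval (h j) z‖)
        (Finset.mem_univ (⟨0, hs⟩ : Fin s)))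
  set SupH : ℝ := Finset.univ.sup' (Finset.univ_nonempty_iff.mpr
      (Fin.pos_iff_nonempty.mp hs)) fun j => ‖laurentEval (h j) z‖
    with hSupH
  have hGM : ‖laurentEval (g i₀) z‖ ≤ M :=
    le_trans (hB i₀ z hzC) (hMB i₀)
  have step2 : ‖laurentEval (g i₀) z‖ ^ κf i₀ ≤ s * Amax * SupH := by
    calc ‖laurentEval (g i₀) z‖ ^ κf i₀
        = ‖laurentEval (g i₀) z ^ κf i₀‖ := by rw [norm_pow]
      _ = ‖∑ j, a i₀ j z * laurentEval (h j) z‖ := by rw [hkey i₀ z]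
      _ ≤ ∑ j, ‖a i₀ j z * laurentEval (h j) z‖ :=
          norm_sum_le _ _
      _ ≤ ∑ _j : Fin s, Amax * SupH := by
          refine Finset.sum_le_sum fun j _ => ?_
          rw [norm_mul]
          refine mul_le_mul (le_trans (hA i₀ j z hzC) (hAB i₀ j)) ?_
            (norm_nonneg _) (le_of_lt hApos)
          exact Finset.le_sup' (fun j => ‖laurentEval (h j) z‖)
            (Finset.mem_univ j)
      _ = s * Amax * SupH := by
          rw [Finset.sum_const, Finset.card_univ, Fintype.card_fin,
            nsmul_eq_mul]
          ring
  calc (Finset.univ.sup' (Finset.univ_nonempty_iff.mpr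
          (Fin.pos_iff_nonempty.mp hr))
        fun i => ‖laurentEval (g i) z‖) ^ κ
      = ‖laurentEval (g i₀) z‖ ^ (κ - κf i₀) *
          ‖laurentEval (g i₀) z‖ ^ κf i₀ := by
        rw [hi₀, ← pow_add]
        congr 1
        omega
    _ ≤ M ^ (κ - κf i₀) * (s * Amax * SupH) :=
        mul_le_mul (pow_le_pow_left₀ (norm_nonneg _) hGM _) step2
          (pow_nonneg (norm_nonneg _) _) (by positivity)
    _ ≤ M ^ κ * (s * Amax * SupH) := by
        have := pow_le_pow_right₀ hM1 (Nat.sub_le κ (κf i₀))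
        nlinarith [mul_nonneg (mul_nonneg hspos.le hApos.le) hH0]
    _ = M ^ κ * (s * Amax) * SupH := by ring
end
end
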